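/- arXiv:2211.04409 — 2 statements merged into one kernel-verified Lean document; each statement's English description precedes it below -/
import Mathlib

section
/- Total gain identity (Proposition 3): For a tree m with node values p_m(t) = −α·(Σ_{x_i∈R_t} G_i)/(|R_t|+λ) and PreDecomp attributions f_{m,k}(x) = Σ_{inner t: v(t)=k}[p_m(left(t))·1[x∈R_{left(t)}] + p_m(right(t))·1[x∈R_{right(t)}] − p_m(t)·1[x∈R_t]], the total gain for feature k, TotalGain_{m,k} = Σ_{inner t: v(t)=k} Δ(t), equals −α^{−1}·Σ_{i=1}^N f_{m,k}(x_i)·G_i, where Δ(t) = (Σ_{x_i∈R_{left(t)}} G_i)²/(|R_{left(t)}|+λ) + (Σ_{x_i∈R_{right(t)}} G_i)²/(|R_{right(t)}|+λ) − (Σ_{x_i∈R_t} G_i)²/(|R_t|+λ). -/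
open MeasureTheory Set Finset Filter

/-- A finite full binary tree: every node carries a region `R ⊆ β` and a value `w : ℝ`;
inner nodes additionally carry a split feature `v : ℕ`. -/
inductive BT (β : Type) where
  | leaf (R : Set β) (w : ℝ)
  | node (R : Set β) (w : ℝ) (v : ℕ) (l r : BT β)

namespace BT

variable {β ι : Type}

/-- The region associated with the root node of a (sub)tree. -/
def region : BT β → Set β
  | leaf R _ => R
  | node R _ _ _ _ => R

/-- The value assigned to the root node of a (sub)tree. -/
def val : BT β → ℝ
  | leaf _ w => w
  | node _ w _ _ _ => w

/-- Well-formedness: the children's regions partition the parent's region. -/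
def WF : BT β → Prop
  | leaf _ _ => True
  | node R _ _ l r => l.region ∪ r.region = R ∧ Disjoint l.region r.region ∧ l.WF ∧ r.WF

/-- Tree prediction: `f(X) = Σ_{leaves ℓ} p(ℓ) · 1[X ∈ R_ℓ]`. -/
noncomputable def pred : BT β → β → ℝ
  | leaf R w, X => R.indicator (fun _ => w) X
  | node _ _ _ l r, X => l.pred X + r.pred X

/-- Total attribution: sum over all inner nodes `t` of
`p(left t)·1[X∈R_left] + p(right t)·1[X∈R_right] − p(t)·1[X∈R_t]`. -/
noncomputable def attr : BT β → β → ℝ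
  | leaf _ _, _ => 0
  | node R w _ l r, X =>
      (l.region.indicator (fun _ => l.val) X + r.region.indicator (fun _ => r.val) X
        - R.indicator (fun _ => w) X) + l.attr X + r.attr X

/-- PreDecomp: per-feature attribution, summing only over inner nodes splitting on feature `k`. -/
noncomputable def attrF (k : ℕ) : BT β → β → ℝ
  | leaf _ _, _ => 0
  | node R w v l r, X =>
      (if v = k then
        l.region.indicator (fun _ => l.val) X + r.region.indicator (fun _ => r.val) X
          - R.indicator (fun _ => w) X
       else 0) + l.attrF k X + r.attrF k X

/-- All split features of inner nodes belong to `s`. -/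
def FeatsIn (s : Finset ℕ) : BT β → Prop
  | leaf _ _ => True
  | node _ _ v l r => v ∈ s ∧ l.FeatsIn s ∧ r.FeatsIn s

/-- Every node's value equals `pv` of its region. -/
def ValsEq (pv : Set β → ℝ) : BT β → Prop
  | leaf R w => w = pv R
  | node R w _ l r => w = pv R ∧ l.ValsEq pv ∧ r.ValsEq pv

/-- A predicate holds for every node's region. -/
def AllRegions (P : Set β → Prop) : BT β → Prop
  | leaf R _ => P R
  | node R _ _ l r => P R ∧ l.AllRegions P ∧ r.AllRegions P

/-- A predicate holds at every subtree (i.e. every node). -/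
def AllSub (P : BT β → Prop) : BT β → Prop
  | leaf R w => P (leaf R w)
  | node R w v l r => P (node R w v l r) ∧ l.AllSub P ∧ r.AllSub P

end BT

/-- `Σ_{x_i ∈ R ∩ D} G_i`. -/
noncomputable def gsum {β ι : Type} (D : Finset ι) (x : ι → β) (G : ι → ℝ) (R : Set β) : ℝ :=
  ∑ i ∈ D, R.indicator (fun _ => G i) (x i)

/-- `|R ∩ D|` as a real number. -/
noncomputable def cnt {β ι : Type} (D : Finset ι) (x : ι → β) (R : Set β) : ℝ :=
  ∑ i ∈ D, R.indicator (fun _ => (1 : ℝ)) (x i)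

namespace BT

/-- Total gain of feature `k` in a tree: sum of split gains over inner nodes splitting on `k`. -/
noncomputable def totalGain {β ι : Type} (D : Finset ι) (x : ι → β) (G : ι → ℝ)
    (lam : ℝ) (k : ℕ) : BT β → ℝ
  | leaf _ _ => 0
  | node R _ v l r =>
      (if v = k then
        (gsum D x G l.region) ^ 2 / (cnt D x l.region + lam)
        + (gsum D x G r.region) ^ 2 / (cnt D x r.region + lam)
        - (gsum D x G R) ^ 2 / (cnt D x R + lam)
       else 0)
      + totalGain D x G lam k l + totalGain D x G lam k r

end BT

lemma sum_ind_mul {β ι : Type} (D : Finset ι) (x : ι → β) (G : ι → ℝ) (R : Set β) (w : ℝ) :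
    ∑ i ∈ D, (R.indicator (fun _ => w) (x i)) * G i = w * gsum D x G R := by
  simp only [gsum, Finset.mul_sum]
  refine Finset.sum_congr rfl fun i _ => ?_
  by_cases h : x i ∈ R <;> simp [h, mul_comm]

/-- Total gain identity: with PreDecomp node values
`p_m(t) = −α·(Σ_{x_i∈R_t} G_i)/(|R_t|+λ)`,
`TotalGain_{m,k} = −α⁻¹·Σ_{i=1}^N f_{m,k}(x_i)·G_i`. -/
theorem stmt_3 {β ι : Type} (D : Finset ι) (x : ι → β) (G : ι → ℝ)
    (α lam : ℝ) (hα : 0 < α) (hlam : 0 ≤ lam)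
    (t : BT β) (hWF : t.WF)
    (hpos : t.AllRegions (fun R => 0 < cnt D x R + lam))
    (hvals : t.ValsEq (fun R => -α * gsum D x G R / (cnt D x R + lam)))
    (k : ℕ) :
    t.totalGain D x G lam k = -α⁻¹ * ∑ i ∈ D, t.attrF k (x i) * G i := by
  induction t with
  | leaf R w => simp [BT.totalGain, BT.attrF]
  | node R w v l r ihl ihr =>
    obtain ⟨hun, hdis, hWFl, hWFr⟩ := hWF
    obtain ⟨hpR, hpl, hpr⟩ := hpos
    obtain ⟨hv, hvl, hvr⟩ := hvals
    have IHl := ihl hWFl hpl hvl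
    have IHr := ihr hWFr hpr hvr
    have hpl0 : 0 < cnt D x l.region + lam := by
      cases l with | leaf R w => exact hpl | node R w v a b => exact hpl.1
    have hpr0 : 0 < cnt D x r.region + lam := by
      cases r with | leaf R w => exact hpr | node R w v a b => exact hpr.1
    have hvl0 : l.val = -α * gsum D x G l.region / (cnt D x l.region + lam) := by
      cases l with | leaf R w => exact hvl | node R w v a b => exact hvl.1
    have hvr0 : r.val = -α * gsum D x G r.region / (cnt D x r.region + lam) := by
      cases r with | leaf R w => exact hvr | node R w v a b => exact hvr.1
    simp only [BT.totalGain, BT.attrF]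
    rw [show ∀ f g h : ι → ℝ, ∑ i ∈ D, (f i + g i + h i) * G i
        = ∑ i ∈ D, f i * G i + ∑ i ∈ D, g i * G i + ∑ i ∈ D, h i * G i from
      fun f g h => by rw [← Finset.sum_add_distrib, ← Finset.sum_add_distrib]; exact Finset.sum_congr rfl fun i _ => by ring]
    rw [mul_add, mul_add, ← IHl, ← IHr]
    congr 1
    by_cases hk : v = k
    · simp only [hk, if_true]
      have : ∑ i ∈ D, (l.region.indicator (fun _ => l.val) (x i)
          + r.region.indicator (fun _ => r.val) (x i)
          - R.indicator (fun _ => w) (x i)) * G i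
          = l.val * gsum D x G l.region + r.val * gsum D x G r.region - w * gsum D x G R := by
        simp only [sub_mul, add_mul, Finset.sum_sub_distrib, Finset.sum_add_distrib,
          sum_ind_mul]
      rw [this, hvl0, hvr0, hv]
      have hα0 : α ≠ 0 := ne_of_gt hα
      field_simp
      ring
    · simp [hk]
end

section
/- TreeInner with PreDecomp on the training data recovers total gain: defining GFA_f(m,k) = −α^{−1}·Σ_{i=1}^N f_{m,k}(x_i)·G_i with PreDecomp attributions f_{m,k} built from p_m(t) = −α·(Σ_{x_i∈R_t} G_i)/(|R_t|+λ), one has GFA_f(m,k) = TotalGain_{m,k} for every feature k, and summing over trees, GFA_f(k) = Σ_{m=1}^M GFA_f(m,k) = TotalGain_k = Σ_m Σ_{inner t in tree m: v(t)=k} Δ_m(t). -/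
open MeasureTheory Set Finset Filter

lemma ind_mul' {β : Type} (R : Set β) (c g : ℝ) (y : β) :
    R.indicator (fun _ => c) y * g = c * R.indicator (fun _ => g) y := by
  by_cases h : y ∈ R <;> simp [Set.indicator_apply, h]

lemma valsEq_val {β : Type} (pv : Set β → ℝ) :
    ∀ t : BT β, t.ValsEq pv → t.val = pv t.region := by
  intro t h
  cases t with
  | leaf R w => exact h
  | node R w v l r => exact h.1

lemma key_lemma {β ι : Type} (D : Finset ι) (x : ι → β) (G : ι → ℝ)
    (α lam : ℝ) (hα : α ≠ 0) (k : ℕ) :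
    ∀ t : BT β, t.ValsEq (fun R => -α * gsum D x G R / (cnt D x R + lam)) →
      -α⁻¹ * ∑ i ∈ D, t.attrF k (x i) * G i = t.totalGain D x G lam k := by
  intro t
  induction t with
  | leaf R w => intro _; simp [BT.attrF, BT.totalGain]
  | node R w v l r ihl ihr =>
    intro h
    obtain ⟨hw, hl, hr⟩ := h
    have hlv := valsEq_val _ l hl
    have hrv := valsEq_val _ r hr
    simp only [BT.attrF, BT.totalGain]
    have hsplit : ∀ i ∈ D,
        ((if v = k then
            l.region.indicator (fun _ => l.val) (x i)
              + r.region.indicator (fun _ => r.val) (x i)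
              - R.indicator (fun _ => w) (x i)
          else 0) + l.attrF k (x i) + r.attrF k (x i)) * G i
        = (if v = k then
            l.region.indicator (fun _ => l.val) (x i) * G i
              + r.region.indicator (fun _ => r.val) (x i) * G i
              - R.indicator (fun _ => w) (x i) * G i
          else 0) + l.attrF k (x i) * G i + r.attrF k (x i) * G i := by
      intro i _
      split_ifs <;> ring
    rw [Finset.sum_congr rfl hsplit]
    rw [Finset.sum_add_distrib, Finset.sum_add_distrib]
    rw [mul_add, mul_add, ihl hl, ihr hr]
    congr 1
    congr 1
    by_cases hv : v = k
    · simp only [hv, if_true]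
      have hrw : ∀ i ∈ D,
          l.region.indicator (fun _ => l.val) (x i) * G i
            + r.region.indicator (fun _ => r.val) (x i) * G i
            - R.indicator (fun _ => w) (x i) * G i
          = l.val * l.region.indicator (fun _ => G i) (x i)
            + r.val * r.region.indicator (fun _ => G i) (x i)
            - w * R.indicator (fun _ => G i) (x i) := by
        intro i _
        rw [ind_mul', ind_mul', ind_mul']
      rw [Finset.sum_congr rfl hrw]
      rw [Finset.sum_sub_distrib, Finset.sum_add_distrib, ← Finset.mul_sum,
        ← Finset.mul_sum, ← Finset.mul_sum]
      have hls : ∑ i ∈ D, l.region.indicator (fun _ => G i) (x i) = gsum D x G l.region := rfl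
      have hrs : ∑ i ∈ D, r.region.indicator (fun _ => G i) (x i) = gsum D x G r.region := rfl
      have hRs : ∑ i ∈ D, R.indicator (fun _ => G i) (x i) = gsum D x G R := rfl
      rw [hls, hrs, hRs, hlv, hrv, hw]
      have hkey : -α⁻¹ *
          (-α * gsum D x G l.region / (cnt D x l.region + lam) * gsum D x G l.region
            + -α * gsum D x G r.region / (cnt D x r.region + lam) * gsum D x G r.region
            - -α * gsum D x G R / (cnt D x R + lam) * gsum D x G R)
          = (α⁻¹ * α) *
            ((gsum D x G l.region) ^ 2 / (cnt D x l.region + lam)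
              + (gsum D x G r.region) ^ 2 / (cnt D x r.region + lam)
              - (gsum D x G R) ^ 2 / (cnt D x R + lam)) := by
        ring
      rw [hkey, inv_mul_cancel₀ hα, one_mul]
    · simp [hv]

/-- TreeInner with PreDecomp on training data recovers total gain, tree by
tree, and summed over the `M` trees of the ensemble. -/
theorem stmt_9 {β ι : Type} (D : Finset ι) (x : ι → β) (M : ℕ)
    (T : Fin M → BT β) (G : Fin M → ι → ℝ)
    (α lam : ℝ) (hα : 0 < α) (hlam : 0 ≤ lam)
    (hWF : ∀ m, (T m).WF)
    (hpos : ∀ m, (T m).AllRegions (fun R => 0 < cnt D x R + lam))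
    (hvals : ∀ m, (T m).ValsEq (fun R => -α * gsum D x (G m) R / (cnt D x R + lam)))
    (k : ℕ) :
    (∀ m, -α⁻¹ * ∑ i ∈ D, (T m).attrF k (x i) * G m i
        = (T m).totalGain D x (G m) lam k) ∧
    (∑ m, -α⁻¹ * ∑ i ∈ D, (T m).attrF k (x i) * G m i
        = ∑ m, (T m).totalGain D x (G m) lam k) := by
  have h1 : ∀ m, -α⁻¹ * ∑ i ∈ D, (T m).attrF k (x i) * G m i
      = (T m).totalGain D x (G m) lam k := fun m =>
    key_lemma D x (G m) α lam (ne_of_gt hα) k (T m) (hvals m)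
  exact ⟨h1, Finset.sum_congr rfl fun m _ => h1 m⟩
end
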